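/- Let (y_m)_{m≥1} be a sequence of real numbers that is equidistributed modulo 1, let n and k be distinct positive integers, and let α, β be real numbers with 0 ≤ α ≤ 1/2 and 0 ≤ β ≤ 1/2. Then the limit as M → ∞ of (1/M) ∑_{m=1}^M λ({x ∈ [0,1] : ‖n·x + y_m‖ < α and ‖k·x + y_m‖ < β}) exists and equals 4·α·β, where λ denotes Lebesgue measure. -/

import Mathlib

open MeasureTheory Filter Set

/-- Distance from a real number to the nearest integer. -/
noncomputable def nint (t : ℝ) : ℝ := |t - (round t : ℝ)|

lemma nint_eq_min (t : ℝ) : nint t = min (Int.fract t) (1 - Int.fract t) :=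
  abs_sub_round_eq_min t

lemma nint_sub_le (u v : ℝ) : nint u - nint v ≤ |u - v| := by
  have h1 : nint u ≤ |u - (round v : ℝ)| := round_le u (round v)
  have h2 : |u - (round v : ℝ)| ≤ |u - v| + |v - (round v : ℝ)| := by
    have : u - (round v : ℝ) = (u - v) + (v - round v) := by ring
    rw [this]; exact abs_add_le _ _
  have : nint v = |v - (round v : ℝ)| := rfl
  linarith

lemma lipschitz_nint : LipschitzWith 1 nint := by
  apply LipschitzWith.of_dist_le_mul
  intro s t
  rw [Real.dist_eq, Real.dist_eq, NNReal.coe_one, one_mul]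
  rw [abs_sub_le_iff]
  refine ⟨nint_sub_le s t, ?_⟩
  have := nint_sub_le t s
  rwa [abs_sub_comm] at this

lemma continuous_nint : Continuous nint := lipschitz_nint.continuous

lemma nint_add_int (t : ℝ) (m : ℤ) : nint (t + m) = nint t := by
  simp [nint_eq_min, Int.fract_add_intCast]

lemma nint_nonneg (t : ℝ) : 0 ≤ nint t := abs_nonneg _

noncomputable def gg (a t : ℝ) : ℝ := if nint t < a then 1 else 0

lemma gg_nonneg (a t : ℝ) : 0 ≤ gg a t := by unfold gg; split <;> norm_num

lemma gg_le_one (a t : ℝ) : gg a t ≤ 1 := by unfold gg; split <;> norm_num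

lemma abs_gg_mul_gg_le_one (a b s t : ℝ) : ‖gg a s * gg b t‖ ≤ 1 := by
  rw [Real.norm_eq_abs, abs_mul, abs_of_nonneg (gg_nonneg a s), abs_of_nonneg (gg_nonneg b t)]
  calc gg a s * gg b t ≤ 1 * 1 := by
        exact mul_le_mul (gg_le_one a s) (gg_le_one b t) (gg_nonneg b t) zero_le_one
    _ = 1 := by norm_num

lemma gg_periodic (a : ℝ) : Function.Periodic (gg a) 1 := by
  intro t
  unfold gg
  rw [show t + (1:ℝ) = t + ((1:ℤ):ℝ) by norm_num, nint_add_int]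

lemma measurable_gg (a : ℝ) : Measurable (gg a) :=
  Measurable.ite (measurableSet_lt continuous_nint.measurable measurable_const)
    measurable_const measurable_const

lemma integral_gg (a : ℝ) (h0 : 0 ≤ a) (h : a ≤ 1/2) :
    ∫ t in (0:ℝ)..1, gg a t = 2 * a := by
  have hset : {t : ℝ | nint t < a} ∩ Ioo 0 1 = Ioo 0 a ∪ Ioo (1-a) 1 := by
    ext t
    simp only [mem_inter_iff, mem_setOf_eq, mem_Ioo, mem_union]
    constructor
    · rintro ⟨hn, h0t, ht1⟩
      rw [nint_eq_min, Int.fract_eq_self.2 ⟨le_of_lt h0t, ht1⟩, min_lt_iff] at hn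
      rcases hn with h' | h'
      · exact Or.inl ⟨h0t, h'⟩
      · exact Or.inr ⟨by linarith, ht1⟩
    · rintro (⟨h1', h2'⟩ | ⟨h1', h2'⟩)
      · have ht1 : t < 1 := by linarith
        refine ⟨?_, h1', ht1⟩
        rw [nint_eq_min, Int.fract_eq_self.2 ⟨le_of_lt h1', ht1⟩, min_lt_iff]
        exact Or.inl h2'
      · have h0t : 0 < t := by linarith
        refine ⟨?_, h0t, h2'⟩
        rw [nint_eq_min, Int.fract_eq_self.2 ⟨le_of_lt h0t, h2'⟩, min_lt_iff]
        exact Or.inr (by linarith)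
  have hind : gg a = ({t : ℝ | nint t < a}).indicator (fun _ => (1:ℝ)) := by
    funext t
    simp only [gg, Set.indicator, mem_setOf_eq]
  have hms : MeasurableSet {t : ℝ | nint t < a} :=
    measurableSet_lt continuous_nint.measurable measurable_const
  rw [intervalIntegral.integral_of_le zero_le_one, MeasureTheory.integral_Ioc_eq_integral_Ioo,
    hind, MeasureTheory.setIntegral_indicator hms, Set.inter_comm, hset]
  have hdisj : Disjoint (Ioo (0:ℝ) a) (Ioo (1-a) 1) := by
    rw [Set.disjoint_left]
    rintro t ⟨_, h2'⟩ ⟨h3', _⟩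
    linarith
  rw [MeasureTheory.setIntegral_const, smul_eq_mul, mul_one,
    measureReal_def, measure_union hdisj measurableSet_Ioo, Real.volume_Ioo, Real.volume_Ioo]
  rw [ENNReal.toReal_add (by simp) (by simp)]
  rw [ENNReal.toReal_ofReal (by linarith), ENNReal.toReal_ofReal (by linarith)]
  ring

lemma countable_level (a : ℝ) : {t : ℝ | nint t = a}.Countable := by
  have hsub : {t : ℝ | nint t = a} ⊆
      (range fun m : ℤ => (m:ℝ) + a) ∪ (range fun m : ℤ => (m:ℝ) - a) := by
    intro t ht
    simp only [mem_setOf_eq] at ht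
    have h0 : 0 ≤ a := ht ▸ nint_nonneg t
    have := (abs_eq h0).1 ht
    rcases this with h' | h'
    · exact Or.inl ⟨round t, by simp; linarith⟩
    · exact Or.inr ⟨round t, by simp; linarith⟩
  exact Set.Countable.mono hsub ((countable_range _).union (countable_range _))

lemma countable_pre (c e a : ℝ) (hc : c ≠ 0) : {x : ℝ | nint (c*x + e) = a}.Countable := by
  have : {x : ℝ | nint (c*x + e) = a} = (fun x : ℝ => c*x + e) ⁻¹' {t | nint t = a} := rfl
  rw [this]
  apply (countable_level a).preimage
  intro x1 x2 h
  simp only at h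
  have : c * x1 = c * x2 := by linarith
  exact mul_left_cancel₀ hc this

lemma continuousAt_gg_comp (a c e y₀ : ℝ) (h : nint (c + e*y₀) ≠ a) :
    ContinuousAt (fun y => gg a (c + e*y)) y₀ := by
  have hcont : ContinuousAt (fun y : ℝ => nint (c + e*y)) y₀ :=
    (continuous_nint.comp (continuous_const.add (continuous_mul_left e))).continuousAt
  rcases lt_or_gt_of_ne h with hlt | hgt
  · have hev : ∀ᶠ y in nhds y₀, gg a (c + e*y) = 1 := by
      have := hcont.preimage_mem_nhds (Iio_mem_nhds hlt)
      filter_upwards [this] with y hy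
      simp only [Set.mem_preimage, Set.mem_Iio] at hy
      simp [gg, hy]
    exact Filter.EventuallyEq.continuousAt hev
  · have hev : ∀ᶠ y in nhds y₀, gg a (c + e*y) = 0 := by
      have := hcont.preimage_mem_nhds (Ioi_mem_nhds hgt)
      filter_upwards [this] with y hy
      simp only [Set.mem_preimage, Set.mem_Ioi] at hy
      have : ¬ nint (c + e*y) < a := by intro h'; linarith
      simp [gg, this]
    exact Filter.EventuallyEq.continuousAt hev

lemma measurable_integrand (a b c₁ c₂ e₁ e₂ : ℝ) :
    Measurable (fun x : ℝ => gg a (c₁*x + e₁) * gg b (c₂*x + e₂)) := by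
  exact ((measurable_gg a).comp ((measurable_id.const_mul c₁).add_const e₁)).mul
    ((measurable_gg b).comp ((measurable_id.const_mul c₂).add_const e₂))

lemma continuous_aux (a b c₁ c₂ d₁ d₂ : ℝ) (hc₁ : c₁ ≠ 0) (hc₂ : c₂ ≠ 0) :
    Continuous fun y : ℝ => ∫ x in (0:ℝ)..1, gg a (c₁*x + d₁*y) * gg b (c₂*x + d₂*y) := by
  rw [continuous_iff_continuousAt]
  intro y₀
  apply intervalIntegral.continuousAt_of_dominated_interval
      (bound := fun _ => (1:ℝ))
  · filter_upwards with y
    exact (measurable_integrand a b c₁ c₂ (d₁*y) (d₂*y)).aestronglyMeasurable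
  · filter_upwards with y
    filter_upwards with t _
    exact abs_gg_mul_gg_le_one a b _ _
  · exact intervalIntegrable_const
  · have hnull : volume ({x : ℝ | nint (c₁*x + d₁*y₀) = a} ∪
        {x : ℝ | nint (c₂*x + d₂*y₀) = b}) = 0 :=
      Set.Countable.measure_zero
        (((countable_pre c₁ (d₁*y₀) a hc₁).union (countable_pre c₂ (d₂*y₀) b hc₂))) _
    have hae : ∀ᵐ x : ℝ, x ∉ ({x : ℝ | nint (c₁*x + d₁*y₀) = a} ∪
        {x : ℝ | nint (c₂*x + d₂*y₀) = b}) := by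
      rw [MeasureTheory.ae_iff]
      convert hnull using 2
      ext x
      simp only [Set.mem_union, mem_setOf_eq]
      tauto
    filter_upwards [hae] with x hx _
    simp only [Set.mem_union, mem_setOf_eq, not_or] at hx
    have h1 : ContinuousAt (fun y => gg a (c₁*x + d₁*y)) y₀ := by
      have := continuousAt_gg_comp a (c₁*x) d₁ y₀ (by simpa [mul_comm] using hx.1)
      simpa [mul_comm] using this
    have h2 : ContinuousAt (fun y => gg b (c₂*x + d₂*y)) y₀ := by
      have := continuousAt_gg_comp b (c₂*x) d₂ y₀ (by simpa [mul_comm] using hx.2)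
      simpa [mul_comm] using this
    exact h1.mul h2

lemma swap_aux (f : ℝ → ℝ → ℝ) (hf : Measurable (Function.uncurry f))
    (hb : ∀ x y, ‖f x y‖ ≤ 1) :
    ∫ x in (0:ℝ)..1, (∫ y in (0:ℝ)..1, f x y) = ∫ y in (0:ℝ)..1, (∫ x in (0:ℝ)..1, f x y) := by
  have h01 : (0:ℝ) ≤ 1 := zero_le_one
  simp only [intervalIntegral.integral_of_le h01]
  haveI : IsFiniteMeasure (volume.restrict (Ioc (0:ℝ) 1)) := by
    constructor
    simp [Real.volume_Ioc]
  apply MeasureTheory.integral_integral_swap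
  apply MeasureTheory.Integrable.mono' (MeasureTheory.integrable_const (1:ℝ))
    hf.aestronglyMeasurable
  filter_upwards with p
  exact hb p.1 p.2

lemma H_periodic (α β : ℝ) :
    Function.Periodic (fun d => ∫ u in (0:ℝ)..1, gg α (u + d) * gg β u) 1 := by
  intro d
  simp only
  apply intervalIntegral.integral_congr
  intro u _
  show gg α (u + (d + 1)) * gg β u = gg α (u + d) * gg β u
  rw [show u + (d + 1) = (u + d) + 1 by ring, gg_periodic α]

lemma H_continuous (α β : ℝ) :
    Continuous (fun d => ∫ u in (0:ℝ)..1, gg α (u + d) * gg β u) := by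
  have := continuous_aux α β 1 1 1 0 one_ne_zero one_ne_zero
  simp only [one_mul, zero_mul, add_zero] at this
  exact this

lemma integral_translate_gg (a u : ℝ) :
    ∫ d in (0:ℝ)..1, gg a (u + d) = ∫ t in (0:ℝ)..1, gg a t := by
  have h1 : ∀ d, gg a (u + d) = gg a (d + u) := fun d => by rw [add_comm]
  calc ∫ d in (0:ℝ)..1, gg a (u + d) = ∫ d in (0:ℝ)..1, gg a (d + u) := by
        apply intervalIntegral.integral_congr; intro d _; exact h1 d
    _ = ∫ t in (0+u)..(1+u), gg a t := intervalIntegral.integral_comp_add_right _ u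
    _ = ∫ t in u..(u+1), gg a t := by rw [zero_add, add_comm 1 u]
    _ = ∫ t in (0:ℝ)..(0+1), gg a t := (gg_periodic a).intervalIntegral_add_eq u 0
    _ = ∫ t in (0:ℝ)..1, gg a t := by rw [zero_add]

lemma integral_H (α β : ℝ) (hα0 : 0 ≤ α) (hα : α ≤ 1/2) (hβ0 : 0 ≤ β) (hβ : β ≤ 1/2) :
    ∫ d in (0:ℝ)..1, (∫ u in (0:ℝ)..1, gg α (u + d) * gg β u) = 4 * α * β := by
  have hm : Measurable (Function.uncurry fun d u : ℝ => gg α (u + d) * gg β u) := by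
    apply Measurable.mul
    · exact (measurable_gg α).comp (measurable_snd.add measurable_fst)
    · exact (measurable_gg β).comp measurable_snd
  rw [swap_aux (fun d u => gg α (u + d) * gg β u) hm
      (fun d u => abs_gg_mul_gg_le_one α β _ _)]
  have hinner : ∀ u : ℝ, (∫ d in (0:ℝ)..1, gg α (u + d) * gg β u) = 2 * α * gg β u := by
    intro u
    rw [intervalIntegral.integral_mul_const, integral_translate_gg, integral_gg α hα0 hα]
  rw [intervalIntegral.integral_congr (fun u _ => hinner u)]
  rw [intervalIntegral.integral_const_mul, integral_gg β hβ0 hβ]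
  ring

lemma integral_F (n k : ℕ) (hnk : n ≠ k) (α β : ℝ)
    (hα0 : 0 ≤ α) (hα : α ≤ 1/2) (hβ0 : 0 ≤ β) (hβ : β ≤ 1/2) :
    ∫ y in (0:ℝ)..1, (∫ x in (0:ℝ)..1, gg α ((n:ℝ)*x + y) * gg β ((k:ℝ)*x + y))
      = 4 * α * β := by
  have hm : Measurable (Function.uncurry
      fun y x : ℝ => gg α ((n:ℝ)*x + y) * gg β ((k:ℝ)*x + y)) := by
    apply Measurable.mul
    · exact (measurable_gg α).comp ((measurable_snd.const_mul _).add measurable_fst)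
    · exact (measurable_gg β).comp ((measurable_snd.const_mul _).add measurable_fst)
  rw [swap_aux (fun y x => gg α ((n:ℝ)*x + y) * gg β ((k:ℝ)*x + y)) hm
      (fun y x => abs_gg_mul_gg_le_one α β _ _)]
  have hinner : ∀ x : ℝ, (∫ y in (0:ℝ)..1, gg α ((n:ℝ)*x+y) * gg β ((k:ℝ)*x+y))
      = ∫ u in (0:ℝ)..1, gg α (u + ((n:ℝ)-(k:ℝ))*x) * gg β u := by
    intro x
    have hper : Function.Periodic (fun u => gg α (u + ((n:ℝ)-(k:ℝ))*x) * gg β u) 1 := by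
      intro u
      show gg α (u + 1 + ((n:ℝ)-(k:ℝ))*x) * gg β (u+1) = _
      rw [show u + 1 + ((n:ℝ)-(k:ℝ))*x = (u + ((n:ℝ)-(k:ℝ))*x) + 1 by ring,
        gg_periodic α, gg_periodic β]
    calc (∫ y in (0:ℝ)..1, gg α ((n:ℝ)*x+y) * gg β ((k:ℝ)*x+y))
        = ∫ y in (0:ℝ)..1,
            (fun u => gg α (u + ((n:ℝ)-(k:ℝ))*x) * gg β u) (y + (k:ℝ)*x) := by
          apply intervalIntegral.integral_congr; intro y _
          show gg α ((n:ℝ)*x+y) * gg β ((k:ℝ)*x+y)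
            = gg α ((y + (k:ℝ)*x) + ((n:ℝ)-(k:ℝ))*x) * gg β (y + (k:ℝ)*x)
          congr 1
          · congr 1; ring
          · congr 1; ring
      _ = ∫ u in ((0:ℝ) + (k:ℝ)*x)..((1:ℝ) + (k:ℝ)*x),
            (fun u => gg α (u + ((n:ℝ)-(k:ℝ))*x) * gg β u) u := by
          exact intervalIntegral.integral_comp_add_right
            (fun u => gg α (u + ((n:ℝ)-(k:ℝ))*x) * gg β u) ((k:ℝ)*x)
      _ = ∫ u in ((k:ℝ)*x)..((k:ℝ)*x + 1),
            gg α (u + ((n:ℝ)-(k:ℝ))*x) * gg β u := by rw [zero_add, add_comm 1]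
      _ = ∫ u in (0:ℝ)..((0:ℝ)+1), gg α (u + ((n:ℝ)-(k:ℝ))*x) * gg β u :=
          hper.intervalIntegral_add_eq _ 0
      _ = ∫ u in (0:ℝ)..1, gg α (u + ((n:ℝ)-(k:ℝ))*x) * gg β u := by rw [zero_add]
  rw [intervalIntegral.integral_congr (fun x _ => hinner x)]
  have hc : ((n:ℝ) - (k:ℝ)) ≠ 0 := sub_ne_zero.2 (by exact_mod_cast hnk)
  have hHint : ∀ t₁ t₂ : ℝ, IntervalIntegrable
      (fun d => ∫ u in (0:ℝ)..1, gg α (u + d) * gg β u) volume t₁ t₂ :=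
    fun t₁ t₂ => (H_continuous α β).intervalIntegrable t₁ t₂
  have hcomp := intervalIntegral.integral_comp_mul_left
    (a := (0:ℝ)) (b := (1:ℝ)) (fun d => ∫ u in (0:ℝ)..1, gg α (u + d) * gg β u) hc
  rw [mul_zero, mul_one] at hcomp
  rw [hcomp]
  have hzsmul := (H_periodic α β).intervalIntegral_add_zsmul_eq ((n:ℤ)-(k:ℤ)) 0 hHint
  simp only [zero_add, zsmul_eq_mul] at hzsmul
  push_cast [mul_one] at hzsmul
  show ((n:ℝ)-(k:ℝ))⁻¹ • ∫ x in (0:ℝ)..((n:ℝ)-(k:ℝ)),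
      ∫ u in (0:ℝ)..1, gg α (u + x) * gg β u = 4 * α * β
  rw [hzsmul]
  rw [show (fun x : ℝ => ∫ u in (0:ℝ)..1, gg α (u + x) * gg β u)
      = fun d : ℝ => ∫ u in (0:ℝ)..1, gg α (u + d) * gg β u from rfl]
  rw [integral_H α β hα0 hα hβ0 hβ, smul_eq_mul, ← mul_assoc, inv_mul_cancel₀ hc, one_mul]

lemma vol_eq_integral (c d t a b : ℝ) :
    (volume {x ∈ Icc (0:ℝ) 1 | nint (c*x + t) < a ∧ nint (d*x + t) < b}).toReal
      = ∫ x in (0:ℝ)..1, gg a (c*x+t) * gg b (d*x+t) := by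
  set T : Set ℝ := {x | nint (c*x + t) < a ∧ nint (d*x + t) < b} with hT
  have hmc : Measurable fun x : ℝ => nint (c*x + t) :=
    continuous_nint.measurable.comp ((measurable_id.const_mul c).add_const t)
  have hmd : Measurable fun x : ℝ => nint (d*x + t) :=
    continuous_nint.measurable.comp ((measurable_id.const_mul d).add_const t)
  have hTm : MeasurableSet T :=
    (measurableSet_lt hmc measurable_const).inter (measurableSet_lt hmd measurable_const)
  have hind : ∀ x : ℝ, gg a (c*x+t) * gg b (d*x+t) = T.indicator (fun _ => (1:ℝ)) x := by
    intro x
    simp only [gg, Set.indicator, hT, mem_setOf_eq]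
    by_cases h1 : nint (c*x+t) < a <;> by_cases h2 : nint (d*x+t) < b <;>
      simp [h1, h2]
  rw [intervalIntegral.integral_of_le zero_le_one,
    MeasureTheory.setIntegral_congr_fun measurableSet_Ioc (fun x _ => hind x),
    MeasureTheory.setIntegral_indicator hTm, MeasureTheory.setIntegral_const, smul_eq_mul,
    mul_one]
  have hsep : {x ∈ Icc (0:ℝ) 1 | nint (c*x + t) < a ∧ nint (d*x + t) < b}
      = T ∩ Icc 0 1 := by
    ext x; simp only [hT, Set.mem_sep_iff, mem_inter_iff, mem_setOf_eq]; tauto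
  rw [hsep]
  congr 1
  rw [Set.inter_comm (Ioc (0:ℝ) 1) T]
  apply measure_congr
  have h2 : (Icc (0:ℝ) 1 : Set ℝ) =ᵐ[volume] Ioc (0:ℝ) 1 :=
    (MeasureTheory.Ioc_ae_eq_Icc (α := ℝ) (μ := volume) (a := 0) (b := 1)).symm
  exact (Filter.EventuallyEq.refl _ (T : Set ℝ)).inter h2

/-- A sequence of reals is equidistributed modulo one if for every subinterval
`[a,b] ⊆ [0,1]`, the proportion of `m ≤ M` whose fractional part lies in `[a,b]`
tends to `b - a`. -/
def EquidistributedMod1 (y : ℕ → ℝ) : Prop :=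
  ∀ a b : ℝ, 0 ≤ a → a ≤ b → b ≤ 1 →
    Tendsto (fun M : ℕ =>
        (((Finset.Icc 1 M).filter (fun m => Int.fract (y m) ∈ Set.Icc a b)).card : ℝ) / M)
      atTop (nhds (b - a))

lemma count_Ico_tendsto (y : ℕ → ℝ) (hy : EquidistributedMod1 y) (p q : ℝ)
    (hp0 : 0 ≤ p) (hpq : p ≤ q) (hq1 : q ≤ 1) :
    Tendsto (fun M : ℕ =>
        (((Finset.Icc 1 M).filter (fun m => Int.fract (y m) ∈ Set.Ico p q)).card : ℝ) / M)
      atTop (nhds (q - p)) := by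
  classical
  have hIcc := hy p q hp0 hpq hq1
  have hpt := hy q q (le_trans hp0 hpq) le_rfl hq1
  have hsplit : ∀ M : ℕ,
      (((Finset.Icc 1 M).filter (fun m => Int.fract (y m) ∈ Set.Ico p q)).card : ℝ)
      = (((Finset.Icc 1 M).filter (fun m => Int.fract (y m) ∈ Set.Icc p q)).card : ℝ)
        - (((Finset.Icc 1 M).filter
            (fun m => Int.fract (y m) ∈ Set.Icc p q ∧ Int.fract (y m) = q)).card : ℝ) := by
    intro M
    have key := Finset.card_filter_add_card_filter_not
      (s := (Finset.Icc 1 M).filter (fun m => Int.fract (y m) ∈ Set.Icc p q))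
      (p := fun m => Int.fract (y m) = q)
    rw [Finset.filter_filter, Finset.filter_filter] at key
    have heq : (Finset.Icc 1 M).filter
        (fun m => Int.fract (y m) ∈ Set.Icc p q ∧ ¬ Int.fract (y m) = q)
        = (Finset.Icc 1 M).filter (fun m => Int.fract (y m) ∈ Set.Ico p q) := by
      apply Finset.filter_congr
      intro m _
      simp only [Set.mem_Icc, Set.mem_Ico]
      constructor
      · rintro ⟨⟨h1, h2⟩, h3⟩
        exact ⟨h1, lt_of_le_of_ne h2 h3⟩
      · rintro ⟨h1, h2⟩
        exact ⟨⟨h1, le_of_lt h2⟩, ne_of_lt h2⟩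
    rw [heq] at key
    have := congrArg (fun x : ℕ => (x : ℝ)) key
    push_cast at this
    linarith
  have hdivle : ∀ (u v : ℝ) (M : ℕ), u ≤ v → u / (M:ℝ) ≤ v / M := by
    intro u v M h
    rcases Nat.eq_zero_or_pos M with h0 | h0
    · simp [h0]
    · have : (0:ℝ) < M := by exact_mod_cast h0
      exact (div_le_div_iff_of_pos_right this).2 h
  have hZero : Tendsto (fun M : ℕ => (((Finset.Icc 1 M).filter
      (fun m => Int.fract (y m) ∈ Set.Icc p q ∧ Int.fract (y m) = q)).card : ℝ)/M)
      atTop (nhds 0) := by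
    have hup : ∀ M : ℕ, (((Finset.Icc 1 M).filter
        (fun m => Int.fract (y m) ∈ Set.Icc p q ∧ Int.fract (y m) = q)).card : ℝ)/M
        ≤ (((Finset.Icc 1 M).filter (fun m => Int.fract (y m) ∈ Set.Icc q q)).card : ℝ)/M := by
      intro M
      apply hdivle
      have hsub : (Finset.Icc 1 M).filter
          (fun m => Int.fract (y m) ∈ Set.Icc p q ∧ Int.fract (y m) = q)
          ⊆ (Finset.Icc 1 M).filter (fun m => Int.fract (y m) ∈ Set.Icc q q) := by
        intro m hm
        rw [Finset.mem_filter] at hm ⊢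
        refine ⟨hm.1, ?_⟩
        rw [hm.2.2]
        exact ⟨le_rfl, le_rfl⟩
      exact_mod_cast Finset.card_le_card hsub
    have hpt0 : Tendsto (fun M : ℕ => (((Finset.Icc 1 M).filter
        (fun m => Int.fract (y m) ∈ Set.Icc q q)).card : ℝ)/M) atTop (nhds 0) := by
      simpa using hpt
    apply squeeze_zero (fun M => by positivity) hup hpt0
  have := hIcc.sub hZero
  rw [sub_zero] at this
  apply this.congr
  intro M
  rw [hsplit M, sub_div]

lemma transfer (y : ℕ → ℝ) (hy : EquidistributedMod1 y) (f : ℝ → ℝ)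
    (hf : Continuous f) (hper : Function.Periodic f 1) :
    Tendsto (fun M : ℕ => (∑ m ∈ Finset.Icc 1 M, f (y m)) / M) atTop
      (nhds (∫ t in (0:ℝ)..1, f t)) := by
  classical
  have hfr : ∀ t : ℝ, f (Int.fract t) = f t := by
    intro t
    rw [Int.fract]
    have := hper.sub_int_mul_eq (x := t) ⌊t⌋
    rwa [mul_one] at this
  rw [Metric.tendsto_nhds]
  intro ε hε
  have hε' : 0 < ε/4 := by linarith
  have huc : UniformContinuousOn f (Icc 0 1) :=
    isCompact_Icc.uniformContinuousOn_of_continuous hf.continuousOn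
  obtain ⟨δ, hδ0, hδ⟩ := Metric.uniformContinuousOn_iff.1 huc (ε/4) hε'
  obtain ⟨N, hNposN, hN⟩ : ∃ N : ℕ, 0 < N ∧ 1 / (N:ℝ) < δ := by
    obtain ⟨N0, hN0⟩ := exists_nat_one_div_lt hδ0
    exact ⟨N0 + 1, Nat.succ_pos _, by push_cast; exact hN0⟩
  have hNpos : 0 < (N:ℝ) := by exact_mod_cast hNposN
  set a : ℕ → ℝ := fun i => (i:ℝ)/N with ha
  have ha_lt : ∀ i : ℕ, a (i+1) - a i = 1/(N:ℝ) := by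
    intro i
    simp only [ha]
    push_cast
    field_simp
    ring
  have ha_mono : ∀ i : ℕ, a i ≤ a (i+1) := by
    intro i
    have := ha_lt i
    have h1N : 0 < 1/(N:ℝ) := by positivity
    linarith
  have ha_nonneg : ∀ i : ℕ, 0 ≤ a i := by
    intro i
    simp only [ha]
    positivity
  have ha_le_one : ∀ i : ℕ, i ≤ N → a i ≤ 1 := by
    intro i hi
    simp only [ha, div_le_one hNpos]
    exact_mod_cast hi
  -- characterization of the index
  have hchar : ∀ z : ℝ, 0 ≤ z → z < 1 → ∀ i : ℕ,
      ((⌊z * N⌋).toNat = i ↔ z ∈ Set.Ico (a i) (a (i+1))) := by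
    intro z hz0 hz1 i
    have hznn : 0 ≤ z * N := by positivity
    have hz : (0:ℤ) ≤ ⌊z * N⌋ := Int.floor_nonneg.2 hznn
    rw [Set.mem_Ico]
    constructor
    · intro h
      have hfl : ⌊z * N⌋ = (i:ℤ) := by omega
      have h1 := Int.floor_le (z * N)
      have h2 := Int.lt_floor_add_one (z * N)
      rw [hfl] at h1 h2
      constructor
      · rw [ha]
        rw [div_le_iff₀ hNpos]
        exact_mod_cast h1
      · show z < ((i:ℕ)+1 : ℕ) / (N:ℝ)
        rw [lt_div_iff₀ hNpos]
        push_cast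
        push_cast at h2
        linarith
    · rintro ⟨h1, h2⟩
      rw [ha, div_le_iff₀ hNpos] at h1
      rw [show a (i+1) = ((i:ℝ)+1)/(N:ℝ) by simp only [ha]; push_cast; ring,
        lt_div_iff₀ hNpos] at h2
      have hfl : ⌊z * N⌋ = (i:ℤ) := by
        apply Int.floor_eq_iff.2
        constructor
        · push_cast; linarith
        · push_cast; linarith
      omega
  have hidx_lt : ∀ z : ℝ, 0 ≤ z → z < 1 → (⌊z * N⌋).toNat < N := by
    intro z hz0 hz1
    have h2 : (0:ℤ) ≤ ⌊z * N⌋ := Int.floor_nonneg.2 (by positivity)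
    have h3 : ⌊z * N⌋ < (N:ℤ) := by
      apply Int.floor_lt.2
      push_cast
      nlinarith
    omega
  -- the sum identity
  have hsum : ∀ M : ℕ, ∑ m ∈ Finset.Icc 1 M, f (a (⌊Int.fract (y m) * N⌋.toNat))
      = ∑ i ∈ Finset.range N, (f (a i)) *
        (((Finset.Icc 1 M).filter
          (fun m => Int.fract (y m) ∈ Set.Ico (a i) (a (i+1)))).card : ℝ) := by
    intro M
    rw [← Finset.sum_fiberwise_of_maps_to
      (g := fun m => ⌊Int.fract (y m) * N⌋.toNat) (t := Finset.range N)
      (fun m _ => Finset.mem_range.2 (hidx_lt _ (Int.fract_nonneg _) (Int.fract_lt_one _)))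
      (fun m => f (a (⌊Int.fract (y m) * N⌋.toNat)))]
    apply Finset.sum_congr rfl
    intro i _
    have hcongr : ∀ m ∈ (Finset.Icc 1 M).filter
        (fun m => ⌊Int.fract (y m) * N⌋.toNat = i),
        f (a (⌊Int.fract (y m) * N⌋.toNat)) = f (a i) := by
      intro m hm
      rw [(Finset.mem_filter.1 hm).2]
    rw [Finset.sum_congr rfl hcongr, Finset.sum_const, nsmul_eq_mul, mul_comm]
    have hfe : (Finset.Icc 1 M).filter (fun m => ⌊Int.fract (y m) * (N:ℝ)⌋.toNat = i)
        = (Finset.Icc 1 M).filter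
          (fun m => Int.fract (y m) ∈ Set.Ico (a i) (a (i+1))) := by
      apply Finset.filter_congr
      intro m _
      exact hchar _ (Int.fract_nonneg _) (Int.fract_lt_one _) i
    rw [hfe]
  -- convergence of the Riemann-type sums
  set T : ℕ → ℝ := fun M => (∑ i ∈ Finset.range N, f (a i) *
      (((Finset.Icc 1 M).filter
        (fun m => Int.fract (y m) ∈ Set.Ico (a i) (a (i+1)))).card : ℝ)) / M with hT
  set R : ℝ := ∑ i ∈ Finset.range N, f (a i) * (1/(N:ℝ)) with hR
  have hTR : Tendsto T atTop (nhds R) := by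
    have hTalt : T = fun M => ∑ i ∈ Finset.range N, f (a i) *
        ((((Finset.Icc 1 M).filter
          (fun m => Int.fract (y m) ∈ Set.Ico (a i) (a (i+1)))).card : ℝ) / M) := by
      funext M
      simp only [hT]
      rw [Finset.sum_div]
      apply Finset.sum_congr rfl
      intro i _
      rw [mul_div_assoc]
    rw [hTalt, hR]
    apply tendsto_finset_sum
    intro i hi
    have hi' := Finset.mem_range.1 hi
    have hcnt := count_Ico_tendsto y hy (a i) (a (i+1)) (ha_nonneg i)
      (ha_mono i) (ha_le_one (i+1) hi')
    rw [ha_lt i] at hcnt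
    exact tendsto_const_nhds.mul hcnt
  -- Riemann sum close to the integral
  have hRI : |R - ∫ t in (0:ℝ)..1, f t| ≤ ε/4 := by
    have hint : ∀ j, j < N → IntervalIntegrable f volume (a j) (a (j+1)) :=
      fun j _ => hf.intervalIntegrable _ _
    have hI : ∫ t in (0:ℝ)..1, f t = ∑ i ∈ Finset.range N, ∫ t in a i..a (i+1), f t := by
      rw [intervalIntegral.sum_integral_adjacent_intervals hint]
      have h0 : a 0 = 0 := by simp [ha]
      have h1 : a N = 1 := by
        simp only [ha]
        exact div_self (ne_of_gt hNpos)
      rw [h0, h1]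
    rw [hI, hR, ← Finset.sum_sub_distrib]
    refine le_trans (Finset.abs_sum_le_sum_abs _ _) ?_
    have hterm : ∀ i ∈ Finset.range N,
        |f (a i) * (1/(N:ℝ)) - ∫ t in a i..a (i+1), f t| ≤ (ε/4) * (1/(N:ℝ)) := by
      intro i hi
      have hi' := Finset.mem_range.1 hi
      have hconst : ∫ _t in a i..a (i+1), f (a i) = f (a i) * (1/(N:ℝ)) := by
        rw [intervalIntegral.integral_const, smul_eq_mul, ha_lt i, mul_comm]
      have hsub : ∫ t in a i..a (i+1), (f t - f (a i))
          = (∫ t in a i..a (i+1), f t) - f (a i) * (1/(N:ℝ)) := by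
        rw [intervalIntegral.integral_sub (hf.intervalIntegrable _ _)
          intervalIntegrable_const, hconst]
      have hbnd : |∫ t in a i..a (i+1), (f t - f (a i))| ≤ (ε/4) * |a (i+1) - a i| := by
        rw [← Real.norm_eq_abs (∫ t in a i..a (i+1), (f t - f (a i)))]
        apply intervalIntegral.norm_integral_le_of_norm_le_const
        intro x hx
        rw [Set.uIoc_of_le (ha_mono i)] at hx
        have hx1 : a i < x := hx.1
        have hx2 : x ≤ a (i+1) := hx.2
        have hxIcc : x ∈ Icc (0:ℝ) 1 :=
          ⟨le_trans (ha_nonneg i) (le_of_lt hx1), le_trans hx2 (ha_le_one (i+1) hi')⟩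
        have haIcc : a i ∈ Icc (0:ℝ) 1 :=
          ⟨ha_nonneg i, le_trans (ha_mono i) (ha_le_one (i+1) hi')⟩
        have hdist : dist x (a i) < δ := by
          rw [Real.dist_eq, abs_of_pos (by linarith)]
          have := ha_lt i
          linarith
        have := hδ x hxIcc (a i) haIcc hdist
        rw [Real.dist_eq] at this
        rw [Real.norm_eq_abs]
        exact le_of_lt this
      have hpos1N : (0:ℝ) < 1/(N:ℝ) := by positivity
      rw [ha_lt i, abs_of_pos hpos1N] at hbnd
      calc |f (a i) * (1/(N:ℝ)) - ∫ t in a i..a (i+1), f t|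
          = |∫ t in a i..a (i+1), (f t - f (a i))| := by rw [hsub, abs_sub_comm]
        _ ≤ (ε/4) * (1/(N:ℝ)) := hbnd
    refine le_trans (Finset.sum_le_sum hterm) ?_
    rw [Finset.sum_const, Finset.card_range, nsmul_eq_mul]
    rw [show (N:ℝ) * ((ε/4) * (1/(N:ℝ))) = (ε/4) * ((N:ℝ)/(N:ℝ)) by ring,
      div_self (ne_of_gt hNpos), mul_one]
  -- final assembly
  have hεf : ∀ᶠ M in atTop, dist (T M) R < ε/4 := (Metric.tendsto_nhds.1 hTR) (ε/4) hε'
  filter_upwards [hεf, Filter.eventually_ge_atTop 1] with M hTM hM1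
  have hMpos : (0:ℝ) < M := by exact_mod_cast hM1
  have hST : |(∑ m ∈ Finset.Icc 1 M, f (y m))/M - T M| ≤ ε/4 := by
    have hTM' : T M = (∑ m ∈ Finset.Icc 1 M, f (a (⌊Int.fract (y m) * N⌋.toNat)))/M := by
      simp only [hT]
      rw [hsum M]
    rw [hTM', div_sub_div_same, ← Finset.sum_sub_distrib, abs_div,
      abs_of_pos hMpos, div_le_iff₀ hMpos]
    have hterm : ∀ m ∈ Finset.Icc 1 M,
        |f (y m) - f (a (⌊Int.fract (y m) * N⌋.toNat))| ≤ ε/4 := by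
      intro m _
      set z := Int.fract (y m) with hz
      have hz0 : 0 ≤ z := Int.fract_nonneg _
      have hz1 : z < 1 := Int.fract_lt_one _
      set i := (⌊z * N⌋).toNat with hidef
      have hmem : z ∈ Set.Ico (a i) (a (i+1)) := (hchar z hz0 hz1 i).1 rfl
      have hiltN : i < N := hidx_lt z hz0 hz1
      have hzIcc : z ∈ Icc (0:ℝ) 1 := ⟨hz0, le_of_lt hz1⟩
      have haIcc : a i ∈ Icc (0:ℝ) 1 :=
        ⟨ha_nonneg i, le_trans (ha_mono i) (ha_le_one (i+1) hiltN)⟩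
      have hdist : dist z (a i) < δ := by
        rw [Real.dist_eq, abs_of_nonneg (by linarith [hmem.1])]
        have h2 := hmem.2
        have := ha_lt i
        linarith
      have := hδ z hzIcc (a i) haIcc hdist
      rw [Real.dist_eq] at this
      rw [← hfr (y m)]
      exact le_of_lt this
    calc |∑ m ∈ Finset.Icc 1 M, (f (y m) - f (a (⌊Int.fract (y m) * N⌋.toNat)))|
        ≤ ∑ m ∈ Finset.Icc 1 M, |f (y m) - f (a (⌊Int.fract (y m) * N⌋.toNat))| :=
          Finset.abs_sum_le_sum_abs _ _
      _ ≤ ∑ _m ∈ Finset.Icc 1 M, (ε/4) := Finset.sum_le_sum hterm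
      _ = M * (ε/4) := by
          rw [Finset.sum_const, Nat.card_Icc, Nat.add_sub_cancel, nsmul_eq_mul]
      _ = ε/4 * M := by ring
  have htri := dist_triangle4 ((∑ m ∈ Finset.Icc 1 M, f (y m))/M) (T M) R
    (∫ t in (0:ℝ)..1, f t)
  rw [Real.dist_eq, Real.dist_eq, Real.dist_eq, Real.dist_eq] at htri
  rw [Real.dist_eq]
  have h1 : |R - ∫ t in (0:ℝ)..1, f t| ≤ ε/4 := hRI
  rw [Real.dist_eq] at hTM
  calc |(∑ m ∈ Finset.Icc 1 M, f (y m))/M - ∫ t in (0:ℝ)..1, f t|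
      ≤ |(∑ m ∈ Finset.Icc 1 M, f (y m))/M - T M| + |T M - R|
        + |R - ∫ t in (0:ℝ)..1, f t| := htri
    _ < ε := by linarith

theorem stmt14 (y : ℕ → ℝ) (hy : EquidistributedMod1 y) (n k : ℕ)
    (hn : 1 ≤ n) (hk : 1 ≤ k) (hnk : n ≠ k)
    (α β : ℝ) (hα0 : 0 ≤ α) (hα : α ≤ 1 / 2) (hβ0 : 0 ≤ β) (hβ : β ≤ 1 / 2) :
    Tendsto (fun M : ℕ =>
        (∑ m ∈ Finset.Icc 1 M,
          (volume {x ∈ Set.Icc (0:ℝ) 1 |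
            nint ((n : ℝ) * x + y m) < α ∧ nint ((k : ℝ) * x + y m) < β}).toReal) / M)
      atTop (nhds (4 * α * β)) := by
  have key : ∀ t : ℝ, (volume {x ∈ Set.Icc (0:ℝ) 1 |
      nint ((n : ℝ) * x + t) < α ∧ nint ((k : ℝ) * x + t) < β}).toReal
      = ∫ x in (0:ℝ)..1, gg α ((n:ℝ)*x + t) * gg β ((k:ℝ)*x + t) :=
    fun t => vol_eq_integral _ _ t α β
  set F : ℝ → ℝ := fun t => ∫ x in (0:ℝ)..1, gg α ((n:ℝ)*x + t) * gg β ((k:ℝ)*x + t)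
    with hF
  have hn0 : (n:ℝ) ≠ 0 := Nat.cast_ne_zero.2 (by omega)
  have hk0 : (k:ℝ) ≠ 0 := Nat.cast_ne_zero.2 (by omega)
  have hcont : Continuous F := by
    have := continuous_aux α β (n:ℝ) (k:ℝ) 1 1 hn0 hk0
    simpa only [one_mul] using this
  have hperF : Function.Periodic F 1 := by
    intro t
    simp only [hF]
    apply intervalIntegral.integral_congr
    intro x _
    show gg α ((n:ℝ)*x + (t+1)) * gg β ((k:ℝ)*x + (t+1))
      = gg α ((n:ℝ)*x + t) * gg β ((k:ℝ)*x + t)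
    rw [show (n:ℝ)*x + (t+1) = ((n:ℝ)*x + t) + 1 by ring,
      show (k:ℝ)*x + (t+1) = ((k:ℝ)*x + t) + 1 by ring,
      gg_periodic α, gg_periodic β]
  have hint : ∫ t in (0:ℝ)..1, F t = 4*α*β := integral_F n k hnk α β hα0 hα hβ0 hβ
  have hmain := transfer y hy F hcont hperF
  rw [hint] at hmain
  apply hmain.congr
  intro M
  congr 1
  apply Finset.sum_congr rfl
  intro m _
  exact (key (y m)).symm
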